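/- Let G be a graph and let H be obtained from G by substituting (nonempty) complete graphs for the vertices of G. Then there is a bijection between the minimal chordal completions of G and the minimal chordal completions of H. Concretely, if V(G) = {v_1,...,v_n} and V(H) is partitioned into cliques C_1 ∪ ... ∪ C_n with x ∈ C_i, y ∈ C_j (i ≠ j) adjacent in H iff v_i v_j ∈ E(G), then mapping a graph G' on V(G) to the graph H' on V(H) in which each C_i is a clique and x ∈ C_i, y ∈ C_j (i ≠ j) are adjacent iff v_i v_j ∈ E(G'), restricts to such a bijection. -/

import Mathlib

open SimpleGraph

/-- `f : ZMod n → V` traces an induced cycle of length `n` in `G`: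
`f` is injective and adjacency holds exactly between consecutive vertices. -/
def IsInducedCycle {V : Type*} (G : SimpleGraph V) (n : ℕ) (f : ZMod n → V) : Prop :=
  Function.Injective f ∧ ∀ i j : ZMod n, G.Adj (f i) (f j) ↔ (j = i + 1 ∨ i = j + 1)

/-- A graph is chordal if it has no induced cycle of length at least 4. -/
def Chordal {V : Type*} (G : SimpleGraph V) : Prop :=
  ∀ n, 4 ≤ n → ∀ f : ZMod n → V, ¬ IsInducedCycle G n f

/-- `G'` is a chordal completion of `G`. -/
def ChordalCompletion {V : Type*} (G G' : SimpleGraph V) : Prop :=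
  Chordal G' ∧ G ≤ G'

/-- Minimal chordal completion: no proper spanning subgraph containing `G` is chordal. -/
def MinimalChordalCompletion {V : Type*} (G G' : SimpleGraph V) : Prop :=
  ChordalCompletion G G' ∧ ∀ H, ChordalCompletion G H → H ≤ G' → H = G'

/-- The graph obtained from `G` by substituting, for each vertex `i`,
the complete graph on `C i`. -/
def blowup {V : Type*} (G : SimpleGraph V) (C : V → Type*) :
    SimpleGraph (Σ i, C i) where
  Adj x y := G.Adj x.1 y.1 ∨ (x.1 = y.1 ∧ x ≠ y)
  symm := by
    constructor
    rintro x y (h | ⟨h1, h2⟩)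
    · exact Or.inl h.symm
    · exact Or.inr ⟨h1.symm, h2.symm⟩
  loopless := by
    constructor
    rintro x (h | ⟨_, h2⟩)
    · exact G.irrefl h
    · exact h2 rfl

/-! ### ZMod helpers -/

lemma zmod_natCast_ne_zero {n k : ℕ} (h0 : k ≠ 0) (hkn : k < n) : ((k : ℕ) : ZMod n) ≠ 0 := by
  haveI : NeZero n := ⟨by omega⟩
  intro h
  have := (ZMod.natCast_eq_zero_iff k n).mp h
  exact absurd (Nat.le_of_dvd (by omega) this) (by omega)

lemma zmod_val_add_one {n : ℕ} (hn : 2 ≤ n) (i : ZMod n) :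
    (i + 1).val = if i.val + 1 = n then 0 else i.val + 1 := by
  haveI : NeZero n := ⟨by omega⟩
  haveI : Fact (1 < n) := ⟨by omega⟩
  rw [ZMod.val_add, ZMod.val_one]
  have := ZMod.val_lt i
  split_ifs with h
  · rw [h, Nat.mod_self]
  · exact Nat.mod_eq_of_lt (by omega)

lemma zmod_eq_add_one_iff {n : ℕ} (hn : 2 ≤ n) (i j : ZMod n) :
    j = i + 1 ↔ (j.val = i.val + 1 ∨ (i.val = n - 1 ∧ j.val = 0)) := by
  haveI : NeZero n := ⟨by omega⟩
  rw [← (ZMod.val_injective n).eq_iff, zmod_val_add_one hn]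
  have hi := ZMod.val_lt i
  have hj := ZMod.val_lt j
  split_ifs with h <;> omega

lemma zmod_cast_val {n : ℕ} [NeZero n] (a : ZMod n) : ((a.val : ℕ) : ZMod n) = a := by
  apply ZMod.val_injective
  exact ZMod.val_cast_of_lt (ZMod.val_lt a)

/-! ### Generic chordality transfer -/

lemma chordal_of_induced {W V : Type*} (ι : W → V) (hι : Function.Injective ι)
    (K : SimpleGraph W) (H : SimpleGraph V)
    (h : ∀ a b, K.Adj a b ↔ H.Adj (ι a) (ι b))
    (hH : Chordal H) : Chordal K := by
  intro n hn f hf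
  refine hH n hn (fun t => ι (f t)) ⟨fun a b hab => hf.1 (hι hab), fun i j => ?_⟩
  rw [← h]
  exact hf.2 i j

lemma isInducedCycle_rotate {V : Type*} {H : SimpleGraph V} {n : ℕ} {f : ZMod n → V}
    (hf : IsInducedCycle H n f) (i₀ : ZMod n) : IsInducedCycle H n (fun t => f (i₀ + t)) := by
  obtain ⟨h1, h2⟩ := hf
  refine ⟨fun a b hab => add_left_cancel (h1 hab), fun i j => ?_⟩
  rw [h2 (i₀ + i) (i₀ + j)]
  simp [add_assoc, add_right_inj]

/-! ### Blowup basics -/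

lemma blowup_mono {V : Type*} {G G' : SimpleGraph V} (C : V → Type*) (h : G ≤ G') :
    blowup G C ≤ blowup G' C := by
  rintro ⟨i, x⟩ ⟨j, y⟩ (hadj | hsame)
  · exact Or.inl (h hadj)
  · exact Or.inr hsame

lemma le_of_blowup_le {V : Type*} {G G' : SimpleGraph V} (C : V → Type*)
    [∀ i, Nonempty (C i)] (h : blowup G C ≤ blowup G' C) : G ≤ G' := by
  intro a b hab
  have c : ∀ i, C i := fun i => Classical.arbitrary _
  have : (blowup G C).Adj ⟨a, c a⟩ ⟨b, c b⟩ := Or.inl hab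
  rcases h this with h' | ⟨heq, _⟩
  · exact h'
  · exact absurd heq hab.ne

lemma chordal_blowup_of_chordal {V : Type*} {C : V → Type*} {G : SimpleGraph V}
    (hG : Chordal G) : Chordal (blowup G C) := by
  intro n hn f hf
  obtain ⟨hinj, hadj⟩ := hf
  have h1 : (1 : ZMod n) ≠ 0 := by
    have := zmod_natCast_ne_zero (n := n) (k := 1) one_ne_zero (by omega); simpa using this
  have h2 : (2 : ZMod n) ≠ 0 := by
    have := zmod_natCast_ne_zero (n := n) (k := 2) two_ne_zero (by omega); simpa using this
  have h3 : (3 : ZMod n) ≠ 0 := by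
    have := zmod_natCast_ne_zero (n := n) (k := 3) three_ne_zero (by omega); simpa using this
  set π : ZMod n → V := fun i => (f i).1 with hπ
  have key : ∀ i j : ZMod n, π i = π j → j = i + 1 → False := by
    intro i j hpij hji
    set k := i - 1 with hk
    have hki : (blowup G C).Adj (f k) (f i) := (hadj k i).mpr (Or.inl (by rw [hk]; ring))
    have hkj_ne : k ≠ j := by
      intro h; rw [hk, hji] at h
      exact h2 (by linear_combination -h)
    have hnadj : ¬ (blowup G C).Adj (f k) (f j) := by
      rw [hadj]
      rintro (h | h)
      · rw [hk, hji] at h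
        exact h1 (by linear_combination h)
      · rw [hk, hji] at h
        exact h3 (by linear_combination -h)
    have hfkj : f k ≠ f j := fun h => hkj_ne (hinj h)
    have hπkj : π k ≠ π j := fun h => hnadj (Or.inr ⟨h, hfkj⟩)
    have hpij' : (f i).1 = (f j).1 := hpij
    rcases hki with hG' | ⟨hsame, _⟩
    · exact hnadj (Or.inl (hpij' ▸ hG'))
    · exact hπkj (hsame.trans hpij)
  have hπinj : Function.Injective π := by
    intro i j h
    by_contra hne
    rcases (hadj i j).mp (Or.inr ⟨h, hinj.ne hne⟩) with hL | hR
    · exact key i j h hL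
    · exact key j i h.symm hR
  refine hG n hn π ⟨hπinj, fun i j => ?_⟩
  constructor
  · intro h; exact (hadj i j).mp (Or.inl h)
  · intro h
    rcases (hadj i j).mpr h with hG' | ⟨hsame, _⟩
    · exact hG'
    · exfalso
      have hij : i = j := hπinj hsame
      rcases h with h | h <;> rw [hij] at h <;> exact h1 (by linear_combination -h)

lemma chordal_of_chordal_blowup {V : Type*} {C : V → Type*} [∀ i, Nonempty (C i)]
    {G : SimpleGraph V} (hG : Chordal (blowup G C)) : Chordal G := by
  have c : ∀ i, C i := fun i => Classical.arbitrary _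
  refine chordal_of_induced (fun a => (⟨a, c a⟩ : Σ i, C i))
    (fun a b h => congrArg Sigma.fst h) G (blowup G C) (fun a b => ?_) hG
  constructor
  · intro h; exact Or.inl h
  · rintro (h | ⟨h, hne⟩)
    · exact h
    · exact absurd (by subst h; rfl) hne

/-! ### The twin reduction -/

/-- Delete from `H` all edges from `v` to vertices outside the closed neighborhood of `u`
(keeping the edge `uv`). -/
def twinReduce {V : Type*} (H : SimpleGraph V) (u v : V) : SimpleGraph V where
  Adj a b := H.Adj a b ∧ (a = v → (H.Adj u b ∨ u = b)) ∧ (b = v → (H.Adj u a ∨ u = a))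
  symm := by constructor; rintro a b ⟨h1, h2, h3⟩; exact ⟨h1.symm, h3, h2⟩
  loopless := ⟨fun a h => H.irrefl h.1⟩

lemma twinReduce_le {V : Type*} (H : SimpleGraph V) (u v : V) : twinReduce H u v ≤ H :=
  fun _ _ h => h.1

lemma chordal_twinReduce {V : Type*} {H : SimpleGraph V} {u v : V}
    (hH : Chordal H) (huv : H.Adj u v) : Chordal (twinReduce H u v) := by
  classical
  intro n hn f hf
  haveI : NeZero n := ⟨by omega⟩
  obtain ⟨hinj, hadj⟩ := hf
  by_cases hv : ∀ i, f i ≠ v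
  · -- v not on the cycle: f is induced in H
    refine hH n hn f ⟨hinj, fun i j => ?_⟩
    rw [← hadj i j]
    exact ⟨fun h => ⟨h, fun h' => absurd h' (hv i), fun h' => absurd h' (hv j)⟩, fun h => h.1⟩
  · push_neg at hv
    obtain ⟨i₀, hi₀⟩ := hv
    -- rotate so that v is at position 0
    set f' : ZMod n → V := fun t => f (i₀ + t) with hf'def
    have hcyc' : IsInducedCycle (twinReduce H u v) n f' := isInducedCycle_rotate ⟨hinj, hadj⟩ i₀
    obtain ⟨hinj', hadj'⟩ := hcyc'
    have hf'0 : f' 0 = v := by simp [hf'def, hi₀]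
    have h1 : (1 : ZMod n) ≠ 0 := by
      have := zmod_natCast_ne_zero (n := n) (k := 1) one_ne_zero (by omega); simpa using this
    have hne1 : (1 : ZMod n) ≠ -1 := by
      intro h
      have : (2 : ZMod n) = 0 := by linear_combination h
      have h2 : (2 : ZMod n) ≠ 0 := by
        have := zmod_natCast_ne_zero (n := n) (k := 2) two_ne_zero (by omega); simpa using this
      exact h2 this
    have hfv1 : f' 1 ≠ v := by
      rw [← hf'0]; exact fun h => h1 (hinj' h)
    have hfvn1 : f' (-1) ≠ v := by
      rw [← hf'0]; exact fun h => neg_ne_zero.mpr h1 (hinj' h)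
    have hadj01 : (twinReduce H u v).Adj (f' 0) (f' 1) := (hadj' 0 1).mpr (Or.inl (by ring))
    have hadj0n1 : (twinReduce H u v).Adj (f' 0) (f' (-1)) := (hadj' 0 (-1)).mpr (Or.inr (by ring))
    have hN1 : H.Adj u (f' 1) ∨ u = f' 1 := hadj01.2.1 hf'0
    have hNn1 : H.Adj u (f' (-1)) ∨ u = f' (-1) := hadj0n1.2.1 hf'0
    by_cases hu : ∃ s, f' s = u
    · -- u on the cycle: quick contradiction
      obtain ⟨s, hs⟩ := hu
      have hadj0s : (twinReduce H u v).Adj (f' 0) (f' s) := by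
        rw [hf'0, hs]
        exact ⟨huv.symm, fun _ => Or.inr rfl, fun h => absurd h huv.ne⟩
      have hs' := (hadj' 0 s).mp hadj0s
      have key : H.Adj (f' 1) (f' (-1)) := by
        rcases hs' with h | h
        · -- s = 1
          rw [zero_add] at h
        -- u = f' 1
          subst h
          rcases hNn1 with h' | h'
          · rw [hs] ; exact h'
          · exact absurd (hs.trans h') (fun e => hne1 (hinj' e))
        · -- 0 = s + 1, i.e. s = -1
          have hs1 : s = -1 := by linear_combination -h
          subst hs1
          rcases hN1 with h' | h'
          · exact (by rw [hs]; exact h' : H.Adj (f' (-1)) (f' 1)).symm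
          · exact absurd (hs.trans h') (fun e => hne1 (hinj' e.symm))
      have : (twinReduce H u v).Adj (f' 1) (f' (-1)) :=
        ⟨key, fun h' => absurd h' hfv1, fun h' => absurd h' hfvn1⟩
      rcases (hadj' 1 (-1)).mp this with h | h
      · -- -1 = 2
        have : (3 : ZMod n) = 0 := by linear_combination -h
        have h3 : (3 : ZMod n) ≠ 0 := by
          have := zmod_natCast_ne_zero (n := n) (k := 3) three_ne_zero (by omega); simpa using this
        exact h3 this
      · -- 1 = 0
        exact h1 (by linear_combination h)
    · push_neg at hu
      -- u not on the cycle
      set F : ℕ → V := fun t => f' ((t : ℕ) : ZMod n) with hFdef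
      have hFinj : ∀ s t : ℕ, s < n → t < n → F s = F t → s = t := by
        intro s t hs ht h
        have := hinj' h
        have := congrArg ZMod.val this
        rwa [ZMod.val_cast_of_lt hs, ZMod.val_cast_of_lt ht] at this
      have hF0 : F 0 = v := by simpa [hFdef] using hf'0
      have hFne_v : ∀ t : ℕ, 1 ≤ t → t < n → F t ≠ v := by
        intro t ht1 htn h
        rw [← hF0] at h
        have := hFinj t 0 htn (by omega) h
        omega
      have hFne_u : ∀ t : ℕ, F t ≠ u := fun t => hu _
      -- adjacency of F in twinReduce, in terms of naturals
      have hFadj : ∀ s t : ℕ, s < n → t < n →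
          ((twinReduce H u v).Adj (F s) (F t) ↔
            (t = s + 1 ∨ s = t + 1 ∨ (s = n - 1 ∧ t = 0) ∨ (t = n - 1 ∧ s = 0))) := by
        intro s t hs ht
        rw [hadj' ((s : ℕ) : ZMod n) ((t : ℕ) : ZMod n),
          zmod_eq_add_one_iff (by omega), zmod_eq_add_one_iff (by omega),
          ZMod.val_cast_of_lt hs, ZMod.val_cast_of_lt ht]
        omega
      -- bridge H vs twinReduce away from v
      have hbridge : ∀ s t : ℕ, 1 ≤ s → s < n → 1 ≤ t → t < n →
          (H.Adj (F s) (F t) ↔ (twinReduce H u v).Adj (F s) (F t)) := by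
        intro s t hs1 hs ht1 ht
        exact ⟨fun h => ⟨h, fun h' => absurd h' (hFne_v s hs1 hs),
          fun h' => absurd h' (hFne_v t ht1 ht)⟩, fun h => h.1⟩
      have hF1 : F 1 = f' 1 := by simp [hFdef]
      have hFn1 : F (n - 1) = f' (-1) := by
        have : (((n - 1 : ℕ) : ℕ) : ZMod n) = -1 := by
          have hcast : ((n - 1 + 1 : ℕ) : ZMod n) = 0 := by
            rw [(by omega : n - 1 + 1 = n)]; exact ZMod.natCast_self n
          push_cast at hcast
          linear_combination hcast
        simp only [hFdef, this]
      have hA1 : H.Adj u (F 1) := by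
        rw [hF1]
        rcases hN1 with h | h
        · exact h
        · exact absurd h.symm (hFne_u 1 ∘ (hF1.trans ·))
      have hAn1 : H.Adj u (F (n - 1)) := by
        rw [hFn1]
        rcases hNn1 with h | h
        · exact h
        · exact absurd h.symm (hu _)
      by_cases hall : ∀ t : ℕ, 1 ≤ t → t ≤ n - 1 → H.Adj u (F t)
      · -- all cycle vertices adjacent to u: f' is induced in H
        refine hH n hn f' ⟨hinj', fun i j => ?_⟩
        rw [← hadj' i j]
        constructor
        · intro h
          refine ⟨h, ?_, ?_⟩
          · intro hiv
            have hi0 : i = 0 := hinj' (hiv.trans hf'0.symm)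
            subst hi0
            have hj0 : j ≠ 0 := by
              intro e; subst e; rw [hiv] at h; exact H.irrefl h
            have hjv : 1 ≤ j.val ∧ j.val ≤ n - 1 := by
              have := ZMod.val_lt j
              have : j.val ≠ 0 := fun e => hj0 ((ZMod.val_eq_zero j).mp e)
              omega
            have : f' j = F j.val := by rw [hFdef]; simp [zmod_cast_val]
            rw [this]
            exact Or.inl (hall j.val hjv.1 hjv.2)
          · intro hjv
            have hj0 : j = 0 := hinj' (hjv.trans hf'0.symm)
            subst hj0
            have hi0 : i ≠ 0 := by
              intro e; subst e; rw [hjv] at h; exact H.irrefl h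
            have hiv : 1 ≤ i.val ∧ i.val ≤ n - 1 := by
              have := ZMod.val_lt i
              have : i.val ≠ 0 := fun e => hi0 ((ZMod.val_eq_zero i).mp e)
              omega
            have : f' i = F i.val := by rw [hFdef]; simp [zmod_cast_val]
            rw [this]
            exact Or.inl (hall i.val hiv.1 hiv.2)
        · exact fun h => h.1
      · push_neg at hall
        obtain ⟨k, hk1, hk2, hk3⟩ := hall
        have hkne1 : k ≠ 1 := fun e => hk3 (e ▸ hA1)
        have hknen1 : k ≠ n - 1 := fun e => hk3 (e ▸ hAn1)
        -- maximal adjacent index below k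
        set S₁ : Finset ℕ := (Finset.Ico 1 k).filter (fun s => H.Adj u (F s)) with hS₁
        have hS₁ne : S₁.Nonempty := ⟨1, by simp [hS₁]; exact ⟨by omega, hA1⟩⟩
        set p := S₁.max' hS₁ne with hp
        have hpS : p ∈ S₁ := S₁.max'_mem hS₁ne
        have hp1 : 1 ≤ p ∧ p < k := by
          have := Finset.mem_filter.mp hpS
          have := Finset.mem_Ico.mp this.1
          omega
        have hpadj : H.Adj u (F p) := (Finset.mem_filter.mp hpS).2
        set S₂ : Finset ℕ := (Finset.Ioc k (n - 1)).filter (fun s => H.Adj u (F s)) with hS₂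
        have hS₂ne : S₂.Nonempty := ⟨n - 1, by
          simp [hS₂]
          exact ⟨by omega, hAn1⟩⟩
        set q := S₂.min' hS₂ne with hq
        have hqS : q ∈ S₂ := S₂.min'_mem hS₂ne
        have hq1 : k < q ∧ q ≤ n - 1 := by
          have := Finset.mem_filter.mp hqS
          have := Finset.mem_Ioc.mp this.1
          omega
        have hqadj : H.Adj u (F q) := (Finset.mem_filter.mp hqS).2
        have hgap : ∀ s : ℕ, p < s → s < q → ¬H.Adj u (F s) := by
          intro s hps hsq hadjs
          rcases lt_trichotomy s k with h | h | h
          · have : s ∈ S₁ := Finset.mem_filter.mpr ⟨Finset.mem_Ico.mpr ⟨by omega, h⟩, hadjs⟩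
            exact absurd (S₁.le_max' s this) (by omega)
          · exact hk3 (h ▸ hadjs)
          · have : s ∈ S₂ := Finset.mem_filter.mpr ⟨Finset.mem_Ioc.mpr ⟨h, by omega⟩, hadjs⟩
            exact absurd (S₂.min'_le s this) (by omega)
        set m := q - p + 2 with hm
        have hm4 : 4 ≤ m := by omega
        haveI : NeZero m := ⟨by omega⟩
        set g : ZMod m → V := fun j => if j.val = 0 then u else F (p + j.val - 1) with hg
        have hidx : ∀ jv : ℕ, 1 ≤ jv → jv < m → 1 ≤ p + jv - 1 ∧ p + jv - 1 ≤ n - 1 ∧ p + jv - 1 < n := by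
          intro jv h1' h2'
          omega
        refine hH m hm4 g ⟨?_, ?_⟩
        · -- injectivity
          intro a b hab
          have hav := ZMod.val_lt a
          have hbv := ZMod.val_lt b
          rw [hg] at hab
          simp only at hab
          apply ZMod.val_injective
          by_cases ha0 : a.val = 0 <;> by_cases hb0 : b.val = 0
          · omega
          · rw [if_pos ha0, if_neg hb0] at hab
            exact absurd hab.symm (hFne_u _)
          · rw [if_neg ha0, if_pos hb0] at hab
            exact absurd hab (hFne_u _)
          · rw [if_neg ha0, if_neg hb0] at hab
            have := hFinj _ _ (hidx a.val (by omega) hav).2.2 (hidx b.val (by omega) hbv).2.2 hab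
            omega
        · intro i j
          have hiv := ZMod.val_lt i
          have hjv := ZMod.val_lt j
          rw [zmod_eq_add_one_iff (by omega), zmod_eq_add_one_iff (by omega)]
          rw [hg]
          simp only
          by_cases hi0 : i.val = 0 <;> by_cases hj0 : j.val = 0
          · rw [if_pos hi0, if_pos hj0]
            exact iff_of_false (H.irrefl) (by omega)
          · rw [if_pos hi0, if_neg hj0]
            have hrange := hidx j.val (by omega) hjv
            have hLHS : H.Adj u (F (p + j.val - 1)) ↔ (j.val = 1 ∨ j.val = m - 1) := by
              constructor
              · intro h
                by_contra hc
                push_neg at hc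
                exact hgap (p + j.val - 1) (by omega) (by omega) h
              · rintro (h | h)
                · rw [(by omega : p + j.val - 1 = p)]; exact hpadj
                · rw [(by omega : p + j.val - 1 = q)]; exact hqadj
            rw [hLHS]; omega
          · rw [if_neg hi0, if_pos hj0]
            have hrange := hidx i.val (by omega) hiv
            have hLHS : H.Adj (F (p + i.val - 1)) u ↔ (i.val = 1 ∨ i.val = m - 1) := by
              rw [adj_comm]
              constructor
              · intro h
                by_contra hc
                push_neg at hc
                exact hgap (p + i.val - 1) (by omega) (by omega) h
              · rintro (h | h)
                · rw [(by omega : p + i.val - 1 = p)]; exact hpadj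
                · rw [(by omega : p + i.val - 1 = q)]; exact hqadj
            rw [hLHS]; omega
          · rw [if_neg hi0, if_neg hj0]
            have hri := hidx i.val (by omega) hiv
            have hrj := hidx j.val (by omega) hjv
            rw [hbridge _ _ (by omega) (by omega) (by omega) (by omega),
              hFadj _ _ (by omega) (by omega)]
            omega

/-! ### Transversal-induced graph -/

def transversalGraph {V : Type*} (C : V → Type*) (H : SimpleGraph (Σ i, C i))
    (c : ∀ i, C i) : SimpleGraph V where
  Adj a b := H.Adj ⟨a, c a⟩ ⟨b, c b⟩
  symm := ⟨fun _ _ h => SimpleGraph.Adj.symm h⟩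
  loopless := ⟨fun a h => H.irrefl h⟩

lemma chordal_transversalGraph {V : Type*} {C : V → Type*} {H : SimpleGraph (Σ i, C i)}
    (c : ∀ i, C i) (hH : Chordal H) : Chordal (transversalGraph C H c) :=
  chordal_of_induced (fun a => (⟨a, c a⟩ : Σ i, C i)) (fun a b h => congrArg Sigma.fst h)
    _ H (fun _ _ => Iff.rfl) hH

/-! ### Main theorem -/

theorem stmt_9 {V : Type*} [Fintype V] (G : SimpleGraph V)
    (C : V → Type*) [∀ i, Nonempty (C i)] [∀ i, Fintype (C i)] :
    Set.BijOn (fun G' : SimpleGraph V => blowup G' C)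
      {G' | MinimalChordalCompletion G G'}
      {H' | MinimalChordalCompletion (blowup G C) H'} := by
  classical
  have c : ∀ i, C i := fun i => Classical.arbitrary _
  refine ⟨?_, ?_, ?_⟩
  · -- MapsTo
    rintro G' ⟨⟨hch, hle⟩, hmin⟩
    refine ⟨⟨chordal_blowup_of_chordal hch, blowup_mono C hle⟩, ?_⟩
    intro H ⟨hHch, hHle⟩ hHle'
    refine le_antisymm hHle' ?_
    rintro ⟨i, x⟩ ⟨j, y⟩ (hadj | hsame)
    · -- cross edge of blowup G'
      have hij : i ≠ j := hadj.ne
      set c' : ∀ k, C k := Function.update (Function.update c j y) i x with hc'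
      have hc'i : c' i = x := Function.update_self i x _
      have hc'j : c' j = y := by
        rw [hc', Function.update_of_ne (Ne.symm hij), Function.update_self]
      set K : SimpleGraph V := transversalGraph C H c' with hK
      have hKch : Chordal K := chordal_transversalGraph c' hHch
      have hGK : G ≤ K := fun a b hab => hHle (Or.inl hab)
      have hKG' : K ≤ G' := by
        intro a b hab
        rcases hHle' hab with h | ⟨heq, hne⟩
        · exact h
        · exact absurd (by simp only at heq; subst heq; rfl) hne
      have hKeq : K = G' := hmin K ⟨hKch, hGK⟩ hKG'
      have : K.Adj i j := hKeq ▸ hadj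
      have : H.Adj ⟨i, c' i⟩ ⟨j, c' j⟩ := this
      rwa [hc'i, hc'j] at this
    · exact hHle (Or.inr hsame)
  · -- InjOn
    intro G1 _ G2 _ h
    simp only at h
    exact le_antisymm (le_of_blowup_le C (le_of_eq h)) (le_of_blowup_le C (ge_of_eq h))
  · -- SurjOn
    rintro H' ⟨⟨hch, hle⟩, hmin⟩
    -- uniformity
    have key : ∀ (i j : V) (x x' : C i) (y : C j), i ≠ j →
        H'.Adj ⟨i, x⟩ ⟨j, y⟩ → H'.Adj ⟨i, x'⟩ ⟨j, y⟩ := by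
      intro i j x x' y hij hadj
      by_cases hxx : x = x'
      · exact hxx ▸ hadj
      by_contra hne'
      set u : Σ i, C i := ⟨i, x'⟩ with hu
      set v : Σ i, C i := ⟨i, x⟩ with hv
      have huvne : u ≠ v := by
        simp only [hu, hv, ne_eq, Sigma.mk.inj_iff, heq_eq_eq]
        exact fun h => hxx h.2.symm
      have huv : H'.Adj u v := hle (Or.inr ⟨rfl, huvne⟩)
      have hujne : u ≠ ⟨j, y⟩ := by
        simp only [hu, ne_eq, Sigma.mk.inj_iff]
        exact fun h => hij h.1
      have hred : ChordalCompletion (blowup G C) (twinReduce H' u v) := by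
        refine ⟨chordal_twinReduce hch huv, ?_⟩
        rintro ⟨a, z⟩ ⟨b, w⟩ hab
        refine ⟨hle hab, ?_, ?_⟩
        · intro hav
          rw [hav] at hab
          -- blowup G adj v ⟨b,w⟩
          rcases hab with h | ⟨heq, hne⟩
          · exact Or.inl (hle (Or.inl h))
          · -- same block i
            by_cases hbu : (⟨b, w⟩ : Σ i, C i) = u
            · exact Or.inr hbu.symm
            · refine Or.inl (hle (Or.inr ⟨heq.symm ▸ rfl, ?_⟩))
              exact fun h => hbu h.symm
        · intro hbv
          rw [hbv] at hab
          rcases hab with h | ⟨heq, hne⟩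
          · exact Or.inl (hle (Or.inl h.symm))
          · by_cases hau : (⟨a, z⟩ : Σ i, C i) = u
            · exact Or.inr hau.symm
            · refine Or.inl (hle (Or.inr ⟨heq ▸ rfl, ?_⟩))
              exact fun h => hau h.symm
      have heq := hmin _ hred (twinReduce_le H' u v)
      rw [← heq] at hadj
      rcases hadj.2.1 rfl with h | h
      · exact hne' h
      · exact hujne h
    have key2 : ∀ (i j : V) (x x' : C i) (y y' : C j), i ≠ j →
        H'.Adj ⟨i, x⟩ ⟨j, y⟩ → H'.Adj ⟨i, x'⟩ ⟨j, y'⟩ := by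
      intro i j x x' y y' hij hadj
      have h1 := key i j x x' y hij hadj
      exact (key j i y y' x' (Ne.symm hij) h1.symm).symm
    set G'' : SimpleGraph V := transversalGraph C H' c with hG''
    have hbeq : blowup G'' C = H' := by
      apply le_antisymm
      · rintro ⟨i, x⟩ ⟨j, y⟩ (hadj | hsame)
        · have hij : i ≠ j := hadj.ne
          exact key2 i j (c i) x (c j) y hij hadj
        · exact hle (Or.inr hsame)
      · rintro ⟨i, x⟩ ⟨j, y⟩ h
        by_cases hij : i = j
        · subst hij
          exact Or.inr ⟨rfl, h.ne⟩
        · exact Or.inl (key2 i j x (c i) y (c j) hij h)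
    refine ⟨G'', ?_, hbeq⟩
    have hG''ch : Chordal G'' := chordal_transversalGraph c hch
    have hGle : G ≤ G'' := fun a b hab => hle (Or.inl hab)
    refine ⟨⟨hG''ch, hGle⟩, ?_⟩
    intro L ⟨hLch, hLle⟩ hLle'
    have hbL : ChordalCompletion (blowup G C) (blowup L C) :=
      ⟨chordal_blowup_of_chordal hLch, blowup_mono C hLle⟩
    have hbLle : blowup L C ≤ H' := hbeq ▸ blowup_mono C hLle'
    have := hmin _ hbL hbLle
    rw [← hbeq] at this
    exact le_antisymm hLle' (le_of_blowup_le C (ge_of_eq this))
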